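/- For every natural number N and every (n,m) ∈ ℤ², the truncation error of the N-term approximation satisfies |B_c(n,m) − G_N(c,n,m)| ≤ (1/c²)·(λ/(λ+c²))^N. -/

import Mathlib

open MeasureTheory

open MeasureTheory

/-- The lattice Green's function of the 2D screened Poisson equation. -/
noncomputable def B (α₁ c : ℝ) (n m : ℤ) : ℂ :=
  (1 / (2 * Real.pi) ^ 2 : ℂ) *
    ∫ ξ : ℝ × ℝ in Set.Icc (-Real.pi) Real.pi ×ˢ Set.Icc (-Real.pi) Real.pi,
      Complex.exp (-Complex.I * ((n : ℂ) * (ξ.1 : ℂ) + (m : ℂ) * (ξ.2 : ℂ))) /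
        ((2 * α₁ * (1 - Real.cos ξ.1) + 2 * (1 - Real.cos ξ.2) + c ^ 2 : ℝ) : ℂ)

/-- The coefficients `g_k(n,m)` of the series expansion of the LGF. -/
noncomputable def g (α₁ : ℝ) (k : ℕ) (n m : ℤ) : ℂ :=
  (1 / (4 * Real.pi ^ 2) : ℂ) *
    ∫ ξ : ℝ × ℝ in Set.Icc (-Real.pi) Real.pi ×ˢ Set.Icc (-Real.pi) Real.pi,
      Complex.exp (-Complex.I * ((n : ℂ) * (ξ.1 : ℂ) + (m : ℂ) * (ξ.2 : ℂ))) *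
        (((2 * α₁ * Real.cos ξ.1 + 2 * Real.cos ξ.2) / (2 + 2 * α₁) : ℝ) : ℂ) ^ k

/-- The `N`-term approximation `G_N(c,n,m)` of the LGF. -/
noncomputable def G (α₁ c : ℝ) (N : ℕ) (n m : ℤ) : ℂ :=
  (1 / ((2 + 2 * α₁ + c ^ 2 : ℝ) : ℂ)) *
    ∑ k ∈ Finset.range N,
      ((((2 + 2 * α₁) / (2 + 2 * α₁ + c ^ 2) : ℝ)) : ℂ) ^ k * g α₁ k n m

/-- Truncation error bound: `|B_c(n,m) − G_N(c,n,m)| ≤ (1/c²)(λ/(λ+c²))^N`. -/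

/- ===== auxiliary definitions and lemmas ===== -/

lemma aux_geom (L x : ℝ) (N : ℕ) (hL : L ≠ 0) (h1x : (1:ℝ) - x ≠ 0) :
    1/(L*(1-x)) - (1/L) * ∑ k ∈ Finset.range N, x^k = x^N/(L*(1-x)) := by
  have hgeo : (∑ k ∈ Finset.range N, x^k) * (1-x) = 1 - x^N := by
    linear_combination -geom_sum_mul x N
  field_simp
  linear_combination (-1) * hgeo

lemma aux_key (lam c2 ρv : ℝ) (N : ℕ) (hlam : 0 < lam) (hc2 : 0 < c2) (hρ : |ρv| ≤ lam) :
    1/(lam + c2 - ρv) - ∑ k ∈ Finset.range N, (1/(lam+c2))*((lam/(lam+c2))^k * (ρv/lam)^k)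
      = (ρv/(lam+c2))^N / (lam + c2 - ρv) := by
  have hL : 0 < lam + c2 := by positivity
  have habs := abs_le.1 hρ
  have hterm : ∀ k : ℕ, (1/(lam+c2))*((lam/(lam+c2))^k * (ρv/lam)^k)
      = (1/(lam+c2)) * (ρv/(lam+c2))^k := by
    intro k
    rw [← mul_pow, div_mul_div_comm, mul_comm lam ρv, mul_div_mul_right _ _ hlam.ne']
  rw [Finset.sum_congr rfl (fun k _ => hterm k), ← Finset.mul_sum]
  have h1x : lam + c2 - ρv = (lam + c2) * (1 - ρv/(lam+c2)) := by
    field_simp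
  have h1x0 : (1:ℝ) - ρv/(lam+c2) ≠ 0 := by
    have : ρv/(lam+c2) < 1 := by
      rw [div_lt_one hL]; linarith
    linarith
  rw [h1x]
  exact aux_geom (lam+c2) (ρv/(lam+c2)) N hL.ne' h1x0

noncomputable def fI (n m : ℤ) (ξ : ℝ × ℝ) : ℂ :=
  Complex.exp (-Complex.I * ((n : ℂ) * (ξ.1 : ℂ) + (m : ℂ) * (ξ.2 : ℂ)))

noncomputable def Aden (α₁ c : ℝ) (ξ : ℝ × ℝ) : ℝ :=
  2 * α₁ * (1 - Real.cos ξ.1) + 2 * (1 - Real.cos ξ.2) + c ^ 2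

noncomputable def rhoF (α₁ : ℝ) (ξ : ℝ × ℝ) : ℝ :=
  2 * α₁ * Real.cos ξ.1 + 2 * Real.cos ξ.2

def Sbox : Set (ℝ × ℝ) := Set.Icc (-Real.pi) Real.pi ×ˢ Set.Icc (-Real.pi) Real.pi

lemma fI_cont (n m : ℤ) : Continuous (fI n m) := by unfold fI; fun_prop
lemma Aden_cont (α₁ c : ℝ) : Continuous (Aden α₁ c) := by unfold Aden; fun_prop
lemma rhoF_cont (α₁ : ℝ) : Continuous (rhoF α₁) := by unfold rhoF; fun_prop

lemma fI_norm (n m : ℤ) (ξ : ℝ × ℝ) : ‖fI n m ξ‖ = 1 := by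
  unfold fI
  rw [Complex.norm_exp]
  norm_num [Complex.mul_re, Complex.add_re, Complex.mul_im]

lemma Sbox_compact : IsCompact Sbox := isCompact_Icc.prod isCompact_Icc

lemma Aden_pos (α₁ c : ℝ) (hα₀ : 0 < α₁) (hc : 0 < c) (ξ : ℝ × ℝ) : 0 < Aden α₁ c ξ := by
  have h1 := Real.cos_le_one ξ.1
  have h2 := Real.cos_le_one ξ.2
  have hc2 : 0 < c ^ 2 := by positivity
  unfold Aden
  nlinarith

lemma rhoF_bound (α₁ : ℝ) (hα₀ : 0 < α₁) (ξ : ℝ × ℝ) : |rhoF α₁ ξ| ≤ 2 + 2 * α₁ := by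
  have h1 := Real.cos_le_one ξ.1
  have h2 := Real.cos_le_one ξ.2
  have h3 := Real.neg_one_le_cos ξ.1
  have h4 := Real.neg_one_le_cos ξ.2
  unfold rhoF
  rw [abs_le]
  constructor <;> nlinarith

lemma Aden_eq (α₁ c : ℝ) (ξ : ℝ × ℝ) :
    Aden α₁ c ξ = (2 + 2 * α₁) + c ^ 2 - rhoF α₁ ξ := by
  unfold Aden rhoF; ring

/-- The main algebraic identity: `B - G_N` as a single integral. -/
lemma main_eq (α₁ c : ℝ) (hα₀ : 0 < α₁) (hc : 0 < c) (N : ℕ) (n m : ℤ) :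
    B α₁ c n m - G α₁ c N n m
      = (1 / (4 * Real.pi ^ 2) : ℂ) * ∫ ξ in Sbox,
          fI n m ξ *
            (((rhoF α₁ ξ / (2 + 2 * α₁ + c ^ 2)) ^ N / Aden α₁ c ξ : ℝ) : ℂ) := by
  have hApos := Aden_pos α₁ c hα₀ hc
  have hρb := rhoF_bound α₁ hα₀
  have hlam : (0:ℝ) < 2 + 2 * α₁ := by linarith
  have hL : (0:ℝ) < 2 + 2 * α₁ + c ^ 2 := by positivity
  -- integrability of the basic integrands
  have hint0 : IntegrableOn (fun ξ => fI n m ξ / ((Aden α₁ c ξ : ℝ) : ℂ)) Sbox := by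
    refine ContinuousOn.integrableOn_compact Sbox_compact ?_
    refine Continuous.continuousOn ?_
    exact (fI_cont n m).div (Complex.continuous_ofReal.comp (Aden_cont α₁ c))
      (fun ξ => Complex.ofReal_ne_zero.2 (hApos ξ).ne')
  have hintk : ∀ k : ℕ, IntegrableOn
      (fun ξ => fI n m ξ * ((rhoF α₁ ξ / (2 + 2 * α₁) : ℝ) : ℂ) ^ k) Sbox := by
    intro k
    refine ContinuousOn.integrableOn_compact Sbox_compact ?_
    refine Continuous.continuousOn ?_
    exact (fI_cont n m).mul
      ((Complex.continuous_ofReal.comp ((rhoF_cont α₁).div_const _)).pow k)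
  -- rewrite B
  have hB : B α₁ c n m = (1 / (4 * Real.pi ^ 2) : ℂ) *
      ∫ ξ in Sbox, fI n m ξ / ((Aden α₁ c ξ : ℝ) : ℂ) := by
    rw [B]
    congr 1
    push_cast [mul_pow]
    ring
  -- rewrite G
  have hG : G α₁ c N n m = (1 / (4 * Real.pi ^ 2) : ℂ) *
      ∑ k ∈ Finset.range N, ∫ ξ in Sbox,
        ((1 / ((2 + 2 * α₁ + c ^ 2 : ℝ) : ℂ)) *
            ((((2 + 2 * α₁) / (2 + 2 * α₁ + c ^ 2) : ℝ)) : ℂ) ^ k) *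
          (fI n m ξ * ((rhoF α₁ ξ / (2 + 2 * α₁) : ℝ) : ℂ) ^ k) := by
    rw [G, Finset.mul_sum, Finset.mul_sum]
    refine Finset.sum_congr rfl fun k _ => ?_
    rw [integral_const_mul, g]
    simp only [fI, rhoF, Sbox]
    ring
  rw [hB, hG, ← mul_sub]
  congr 1
  rw [← integral_finset_sum _ (fun k _ => ((hintk k).const_mul _)),
      ← integral_sub hint0 (integrable_finset_sum _ (fun k _ => ((hintk k).const_mul _)))]
  refine integral_congr_ae (Filter.EventuallyEq.of_eq (funext fun ξ => ?_))
  -- pointwise identity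
  have hkey := aux_key (2 + 2 * α₁) (c ^ 2) (rhoF α₁ ξ) N hlam (by positivity) (hρb ξ)
  rw [← Aden_eq α₁ c ξ] at hkey
  have h1 : ∑ k ∈ Finset.range N,
      ((1 / ((2 + 2 * α₁ + c ^ 2 : ℝ) : ℂ)) *
          ((((2 + 2 * α₁) / (2 + 2 * α₁ + c ^ 2) : ℝ)) : ℂ) ^ k) *
        (fI n m ξ * ((rhoF α₁ ξ / (2 + 2 * α₁) : ℝ) : ℂ) ^ k)
      = fI n m ξ * ((∑ k ∈ Finset.range N,
          (1/(2 + 2*α₁ + c^2)) * (((2 + 2*α₁)/(2 + 2*α₁ + c^2))^k *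
            (rhoF α₁ ξ/(2 + 2*α₁))^k) : ℝ) : ℂ) := by
    push_cast
    rw [Finset.mul_sum]
    refine Finset.sum_congr rfl fun k _ => by ring
  rw [h1]
  calc fI n m ξ / ((Aden α₁ c ξ : ℝ) : ℂ) -
        fI n m ξ * ((∑ k ∈ Finset.range N,
          (1/(2 + 2*α₁ + c^2)) * (((2 + 2*α₁)/(2 + 2*α₁ + c^2))^k *
            (rhoF α₁ ξ/(2 + 2*α₁))^k) : ℝ) : ℂ)
      = fI n m ξ * (((1 / Aden α₁ c ξ - ∑ k ∈ Finset.range N,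
          (1/(2 + 2*α₁ + c^2)) * (((2 + 2*α₁)/(2 + 2*α₁ + c^2))^k *
            (rhoF α₁ ξ/(2 + 2*α₁))^k) : ℝ)) : ℂ) := by
        push_cast
        ring
    _ = fI n m ξ * (((rhoF α₁ ξ / (2 + 2 * α₁ + c ^ 2)) ^ N / Aden α₁ c ξ : ℝ) : ℂ) := by
        rw [hkey]


lemma vol_Sbox : (volume Sbox).toReal = 2 * Real.pi * (2 * Real.pi) := by
  have hπ := Real.pi_pos
  rw [Sbox, show (volume : Measure (ℝ×ℝ)) = (volume : Measure ℝ).prod volume from rfl,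
    Measure.prod_prod, Real.volume_Icc, ENNReal.toReal_mul, ENNReal.toReal_ofReal (by linarith)]
  ring_nf

/-- Truncation error bound: `|B_c(n,m) − G_N(c,n,m)| ≤ (1/c²)(λ/(λ+c²))^N`. -/
theorem stmt4 (α₁ c : ℝ) (hα₀ : 0 < α₁) (hα₁ : α₁ ≤ 1) (hc : 0 < c) (N : ℕ) (n m : ℤ) :
    ‖B α₁ c n m - G α₁ c N n m‖
      ≤ (1 / c ^ 2) * ((2 + 2 * α₁) / (2 + 2 * α₁ + c ^ 2)) ^ N := by
  have hπ := Real.pi_pos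
  have hApos := Aden_pos α₁ c hα₀ hc
  have hρb := rhoF_bound α₁ hα₀
  have hlam : (0:ℝ) < 2 + 2 * α₁ := by linarith
  have hL : (0:ℝ) < 2 + 2 * α₁ + c ^ 2 := by positivity
  rw [main_eq α₁ c hα₀ hc N n m, norm_mul]
  have hCc : ‖(1 / (4 * Real.pi ^ 2) : ℂ)‖ = 1 / (4 * Real.pi ^ 2) := by
    rw [show (1 / (4 * Real.pi ^ 2) : ℂ) = ((1 / (4 * Real.pi ^ 2) : ℝ) : ℂ) by push_cast; ring,
      Complex.norm_real, Real.norm_eq_abs, abs_of_pos (by positivity)]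
  rw [hCc]
  set C : ℝ := ((2 + 2 * α₁) / (2 + 2 * α₁ + c ^ 2)) ^ N / c ^ 2 with hC
  have hbound : ‖∫ ξ in Sbox, fI n m ξ *
      (((rhoF α₁ ξ / (2 + 2 * α₁ + c ^ 2)) ^ N / Aden α₁ c ξ : ℝ) : ℂ)‖
      ≤ C * (volume Sbox).toReal := by
    refine norm_setIntegral_le_of_norm_le_const Sbox_compact.measure_lt_top (fun ξ _ => ?_)
    · rw [norm_mul, fI_norm, one_mul, Complex.norm_real, Real.norm_eq_abs,
        abs_div, abs_pow, abs_of_pos (hApos ξ), hC]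
      gcongr
      · rw [abs_div, abs_of_pos hL]
        exact (div_le_div_iff_of_pos_right hL).2 (hρb ξ)
      · rw [Aden_eq]
        have := abs_le.1 (hρb ξ)
        linarith
  calc 1 / (4 * Real.pi ^ 2) * ‖∫ ξ in Sbox, fI n m ξ *
        (((rhoF α₁ ξ / (2 + 2 * α₁ + c ^ 2)) ^ N / Aden α₁ c ξ : ℝ) : ℂ)‖
      ≤ 1 / (4 * Real.pi ^ 2) * (C * (volume Sbox).toReal) := by
        gcongr
    _ = (1 / c ^ 2) * ((2 + 2 * α₁) / (2 + 2 * α₁ + c ^ 2)) ^ N := by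
        rw [vol_Sbox, hC]
        field_simp
        ring
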